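/- Let p be a prime and K a commutative ring of characteristic p. For 0 ≤ k ≤ p−1 and series A, B ∈ K[[X]], define C_{k,1} = Σ_{n≥0} γ_{k+np} Xⁿ for C = Σ γₙXⁿ. Then (A ⧢ B)_{k,1} = Σ_{i=0}^{k} C(k,i) · (A_{i,1} ⧢ B_{k−i,1}). -/

import Mathlib

open PowerSeries

/-- The shuffle product of formal power series. -/
noncomputable def shuffle {K : Type*} [CommRing K] (A B : PowerSeries K) : PowerSeries K :=
  PowerSeries.mk fun n => ∑ k ∈ Finset.range (n + 1),
    (n.choose k : K) * (coeff k A) * (coeff (n - k) B)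

/-- The section `C_{k,1} = Σ_{n≥0} γ_{k+np} Xⁿ` of `C = Σ γₙXⁿ`. -/
noncomputable def sect {K : Type*} [CommRing K] (p k : ℕ) (C : PowerSeries K) : PowerSeries K :=
  PowerSeries.mk fun n => coeff (k + n * p) C

lemma lucas_cast {K : Type*} [CommRing K] (p : ℕ) [hp : Fact p.Prime] [CharP K p]
    (k n j : ℕ) (hk : k < p) :
    ((k + n * p).choose j : K) = (k.choose (j % p)) * (n.choose (j / p)) := by
  have h := (Choose.choose_modEq_choose_mod_mul_choose_div_nat (p := p) (n := k + n * p) (k := j))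
  have h1 : (k + n * p) % p = k := by
    simp [Nat.add_mul_mod_self_right, Nat.mod_eq_of_lt hk]
  have h2 : (k + n * p) / p = n := by
    rw [Nat.add_mul_div_right _ _ hp.out.pos, Nat.div_eq_of_lt hk, zero_add]
  rw [h1, h2] at h
  calc ((k + n * p).choose j : K) = ((k.choose (j % p) * n.choose (j / p) : ℕ) : K) :=
        CharP.natCast_eq_natCast' K p h
    _ = _ := by push_cast; ring

/-- Over a commutative ring of prime characteristic `p`, for `0 ≤ k ≤ p − 1`,
`(A ⧢ B)_{k,1} = Σ_{i=0}^{k} C(k,i) · (A_{i,1} ⧢ B_{k−i,1})`. -/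
theorem sect_shuffle {K : Type*} [CommRing K] (p : ℕ) [hp : Fact p.Prime] [CharP K p]
    (k : ℕ) (hk : k ≤ p - 1) (A B : PowerSeries K) :
    sect p k (shuffle A B) =
      ∑ i ∈ Finset.range (k + 1),
        (k.choose i : K) • shuffle (sect p i A) (sect p (k - i) B) := by
  have hkp : k < p := lt_of_le_of_lt hk (Nat.sub_lt hp.out.pos one_pos)
  ext n
  rw [map_sum]
  simp only [sect, shuffle, coeff_mk, PowerSeries.coeff_smul, smul_eq_mul, Finset.mul_sum]
  set g : ℕ → K := fun j => (k.choose (j % p) : K) * (n.choose (j / p)) *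
      (coeff j A) * (coeff (k + n * p - j) B) with hg
  have step1 : ∑ j ∈ Finset.range (k + n * p + 1), ((k + n * p).choose j : K) *
      (coeff j A) * (coeff (k + n * p - j) B) = ∑ j ∈ Finset.range (k + n * p + 1), g j := by
    refine Finset.sum_congr rfl fun j _ => ?_
    rw [hg, lucas_cast p k n j hkp]
  rw [step1]
  have hsub : Finset.range (k + n * p + 1) ⊆ Finset.range ((n + 1) * p) := by
    apply Finset.range_subset_range.2
    have h : (n + 1) * p = n * p + p := by ring
    omega
  have step2 : ∑ j ∈ Finset.range (k + n * p + 1), g j = ∑ j ∈ Finset.range ((n + 1) * p), g j := by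
    refine (Finset.sum_subset hsub fun j hj hj' => ?_)
    have h1 : j < (n + 1) * p := Finset.mem_range.1 hj
    have h2 : k + n * p < j := by
      simpa using Finset.mem_range.not.1 hj'
    have heq : p * (j / p) + j % p = j := Nat.div_add_mod j p
    have hjp : j / p ≤ n := by
      by_contra hc
      push_neg at hc
      have : (n + 1) * p ≤ p * (j / p) := by
        have : n + 1 ≤ j / p := hc
        calc (n + 1) * p = p * (n + 1) := by ring
          _ ≤ p * (j / p) := Nat.mul_le_mul_left p this
      omega
    have hmod : k < j % p := by
      have : p * (j / p) ≤ p * n := Nat.mul_le_mul_left p hjp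
      have hnp : p * n = n * p := by ring
      omega
    rw [hg]
    simp [Nat.choose_eq_zero_of_lt hmod]
  rw [step2]
  have step3 : ∑ j ∈ Finset.range ((n + 1) * p), g j =
      ∑ x ∈ Finset.range (n + 1) ×ˢ Finset.range p, g (x.1 * p + x.2) := by
    refine Finset.sum_nbij' (fun j => (j / p, j % p)) (fun x => x.1 * p + x.2) ?_ ?_ ?_ ?_ ?_
    · intro j hj
      have h1 := Finset.mem_range.1 hj
      refine Finset.mem_product.2 ⟨Finset.mem_range.2 ?_, Finset.mem_range.2 (Nat.mod_lt _ hp.out.pos)⟩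
      have h2 : p * (n + 1) = (n + 1) * p := by ring
      exact Nat.div_lt_of_lt_mul (by omega)
    · intro x hx
      obtain ⟨h1, h2⟩ := Finset.mem_product.1 hx
      refine Finset.mem_range.2 ?_
      have := Finset.mem_range.1 h1
      have := Finset.mem_range.1 h2
      calc x.1 * p + x.2 < x.1 * p + p := by omega
        _ = (x.1 + 1) * p := by ring
        _ ≤ (n + 1) * p := Nat.mul_le_mul_right p (by omega)
    · intro j hj
      exact Nat.div_add_mod' j p
    · intro x hx
      obtain ⟨h1, h2⟩ := Finset.mem_product.1 hx
      have := Finset.mem_range.1 h2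
      have hd : (x.1 * p + x.2) / p = x.1 := by
        rw [mul_comm, Nat.mul_add_div hp.out.pos, Nat.div_eq_of_lt this, add_zero]
      have hm : (x.1 * p + x.2) % p = x.2 := by
        rw [mul_comm, Nat.mul_add_mod, Nat.mod_eq_of_lt this]
      exact Prod.ext hd hm
    · intro j hj
      simp only [hg, Nat.div_add_mod' j p]
  rw [step3, Finset.sum_product, Finset.sum_comm]
  have step4 : ∀ i ∈ Finset.range p, i ∉ Finset.range (k + 1) →
      ∑ m ∈ Finset.range (n + 1), g (m * p + i) = 0 := by
    intro i hi hi'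
    have hik : k < i := by simpa using Finset.mem_range.not.1 hi'
    have hip : i < p := Finset.mem_range.1 hi
    refine Finset.sum_eq_zero fun m _ => ?_
    have hmod : (m * p + i) % p = i := by
      rw [Nat.mul_add_mod', Nat.mod_eq_of_lt hip]
    simp [hg, hmod, Nat.choose_eq_zero_of_lt hik]
  rw [← Finset.sum_subset (Finset.range_subset_range.2 hkp) step4]
  refine Finset.sum_congr rfl fun i hi => ?_
  have hik : i ≤ k := Nat.le_of_lt_succ (Finset.mem_range.1 hi)
  have hip : i < p := lt_of_le_of_lt hik hkp
  refine Finset.sum_congr rfl fun m hm => ?_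
  have hmn : m ≤ n := Nat.le_of_lt_succ (Finset.mem_range.1 hm)
  have hmod : (m * p + i) % p = i := by rw [Nat.mul_add_mod', Nat.mod_eq_of_lt hip]
  have hdiv : (m * p + i) / p = m := by
    rw [mul_comm, Nat.mul_add_div hp.out.pos, Nat.div_eq_of_lt hip, add_zero]
  have hB : k + n * p - (m * p + i) = (k - i) + (n - m) * p := by
    have h1 : (n - m) * p + m * p = n * p := by
      rw [← Nat.add_mul, Nat.sub_add_cancel hmn]
    omega
  have hA : m * p + i = i + m * p := by ring
  rw [hg]
  simp only [hmod, hdiv, hB]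
  rw [hA]
  ring
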